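/- Let (ρ_k) be a positive sequence satisfying ρ_k = ρ_{k-1} + 1/(λ_e + λ_w (1 + λ_e ρ_{k-1})²) with λ_e, λ_w > 0 and ρ_0 > 0. Then ρ_k / k^{1/3} → (3/(λ_w λ_e²))^{1/3} as k → ∞. -/

import Mathlib

open Filter

/-- Two-agent word-of-mouth social learning: the public-belief precision grows like
`k^{1/3}`, with `ρ_k / k^{1/3} → (3/(λ_w λ_e²))^{1/3}`. -/
theorem two_agent_precision_rate
    (lam_e lam_w : ℝ) (hle : 0 < lam_e) (hlw : 0 < lam_w)
    (ρ : ℕ → ℝ) (hρ0 : 0 < ρ 0) (hρpos : ∀ k, 0 < ρ k)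
    (hrec : ∀ k : ℕ, ρ (k + 1) = ρ k + 1 / (lam_e + lam_w * (1 + lam_e * ρ k) ^ 2)) :
    Tendsto (fun k : ℕ => ρ k / (k : ℝ) ^ ((1 : ℝ) / 3)) atTop
      (nhds ((3 / (lam_w * lam_e ^ 2)) ^ ((1 : ℝ) / 3))) := by
  have hcpos : (0:ℝ) < lam_w * lam_e ^ 2 := by positivity
  set A : ℝ := 3 / (lam_w * lam_e ^ 2) with hA
  have hApos : 0 < A := by positivity
  have hDpos : ∀ k, 0 < lam_e + lam_w * (1 + lam_e * ρ k) ^ 2 := by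
    intro k; have := hρpos k; positivity
  -- monotone
  have hmono : Monotone ρ := by
    apply monotone_nat_of_le_succ
    intro k
    have h1 : 0 < 1 / (lam_e + lam_w * (1 + lam_e * ρ k) ^ 2) := by positivity
    rw [hrec k]; linarith
  -- ρ → ∞
  have htop : Tendsto ρ atTop atTop := by
    rcases tendsto_of_monotone hmono with h | ⟨l, hl⟩
    · exact h
    · exfalso
      have hle' : ∀ k, ρ k ≤ l := hmono.ge_of_tendsto hl
      have hl0 : 0 < l := lt_of_lt_of_le (hρpos 0) (hle' 0)
      set c : ℝ := 1 / (lam_e + lam_w * (1 + lam_e * l) ^ 2) with hc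
      have hDl : 0 < lam_e + lam_w * (1 + lam_e * l) ^ 2 := by positivity
      have hcp : 0 < c := by positivity
      have hstep : ∀ k, c ≤ ρ (k + 1) - ρ k := by
        intro k
        have h2 : (1 + lam_e * ρ k) ^ 2 ≤ (1 + lam_e * l) ^ 2 := by
          apply pow_le_pow_left₀ (by have := hρpos k; positivity)
          have := mul_le_mul_of_nonneg_left (hle' k) hle.le
          linarith
        have h3 : lam_e + lam_w * (1 + lam_e * ρ k) ^ 2
            ≤ lam_e + lam_w * (1 + lam_e * l) ^ 2 := by
          have := mul_le_mul_of_nonneg_left h2 hlw.le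
          linarith
        have h4 := one_div_le_one_div_of_le (hDpos k) h3
        rw [hrec k]; linarith
      have hlin : ∀ k : ℕ, ρ 0 + k * c ≤ ρ k := by
        intro k
        induction k with
        | zero => simp
        | succ n ih =>
          have := hstep n
          push_cast
          push_cast at ih
          linarith
      obtain ⟨k, hk⟩ := exists_nat_gt ((l - ρ 0) / c)
      have hk' : l - ρ 0 < k * c := by rwa [div_lt_iff₀ hcp] at hk
      have := hlin k
      have := hle' k
      linarith
  -- ρ² / D → 1/(λw λe²)
  have hC : Tendsto (fun x : ℝ => x ^ 2 / (lam_e + lam_w * (1 + lam_e * x) ^ 2)) atTop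
      (nhds (1 / (lam_w * lam_e ^ 2))) := by
    have h1 : Tendsto (fun x : ℝ => lam_e * x⁻¹ ^ 2 + lam_w * (x⁻¹ + lam_e) ^ 2) atTop
        (nhds (lam_e * 0 ^ 2 + lam_w * (0 + lam_e) ^ 2)) := by
      exact (tendsto_const_nhds.mul (tendsto_inv_atTop_zero.pow 2)).add
        (tendsto_const_nhds.mul ((tendsto_inv_atTop_zero.add tendsto_const_nhds).pow 2))
    have h1' : Tendsto (fun x : ℝ => lam_e * x⁻¹ ^ 2 + lam_w * (x⁻¹ + lam_e) ^ 2) atTop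
        (nhds (lam_w * lam_e ^ 2)) := by
      convert h1 using 2; ring
    have h2 := h1'.inv₀ hcpos.ne'
    rw [← one_div] at h2
    apply h2.congr'
    filter_upwards [eventually_gt_atTop (0:ℝ)] with x hx
    have hD : 0 < lam_e + lam_w * (1 + lam_e * x) ^ 2 := by positivity
    rw [inv_eq_iff_eq_inv, inv_div, eq_div_iff (by positivity : (x:ℝ) ^ 2 ≠ 0)]
    field_simp
  have hq : Tendsto (fun k => (ρ k) ^ 2 / (lam_e + lam_w * (1 + lam_e * ρ k) ^ 2)) atTop
      (nhds (1 / (lam_w * lam_e ^ 2))) := hC.comp htop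
  have hρinv : Tendsto (fun k => (ρ k)⁻¹) atTop (nhds 0) := htop.inv_tendsto_atTop
  -- 1/D → 0
  have hd0 : Tendsto (fun k => 1 / (lam_e + lam_w * (1 + lam_e * ρ k) ^ 2)) atTop
      (nhds 0) := by
    have h := (hq.mul hρinv).mul hρinv
    rw [show (1 / (lam_w * lam_e ^ 2) * 0) * 0 = 0 by ring] at h
    apply h.congr
    intro k
    have := (hρpos k).ne'
    have := (hDpos k).ne'
    field_simp
  -- ρ/D → 0
  have hxf : Tendsto (fun k => ρ k / (lam_e + lam_w * (1 + lam_e * ρ k) ^ 2)) atTop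
      (nhds 0) := by
    have h := hq.mul hρinv
    rw [mul_zero] at h
    apply h.congr
    intro k
    have := (hρpos k).ne'
    have := (hDpos k).ne'
    field_simp
  -- cube differences → A
  have hdiff : Tendsto (fun k => ρ (k + 1) ^ 3 - ρ k ^ 3) atTop (nhds A) := by
    have h := ((hq.const_mul 3).add ((hxf.mul hd0).const_mul 3)).add ((hd0.mul hd0).mul hd0)
    rw [show 3 * (1 / (lam_w * lam_e ^ 2)) + 3 * (0 * 0) + 0 * 0 * 0 = A by
      rw [hA]; ring] at h
    apply h.congr
    intro k
    have hD := (hDpos k).ne'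
    rw [hrec k]
    field_simp
    ring
  -- Cesàro: ρ n ³ / n → A
  have hces := hdiff.cesaro
  have hcube : Tendsto (fun n : ℕ => ρ n ^ 3 / n) atTop (nhds A) := by
    have h0 : Tendsto (fun n : ℕ => ρ 0 ^ 3 / n) atTop (nhds 0) :=
      tendsto_const_div_atTop_nhds_zero_nat _
    have h := hces.add h0
    rw [add_zero] at h
    apply h.congr'
    filter_upwards [eventually_gt_atTop 0] with n hn
    have hn' : (0:ℝ) < (n:ℝ) := by exact_mod_cast hn
    rw [Finset.sum_range_sub (fun i => ρ i ^ 3)]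
    field_simp
    ring
  -- take cube roots
  have hfinal := hcube.rpow_const (p := (1:ℝ)/3) (Or.inl hApos.ne')
  apply hfinal.congr'
  filter_upwards [eventually_gt_atTop 0] with k hk
  have hk' : (0:ℝ) < (k:ℝ) := by exact_mod_cast hk
  rw [Real.div_rpow (by have := hρpos k; positivity) hk'.le,
    ← Real.rpow_natCast (ρ k) 3, ← Real.rpow_mul (hρpos k).le]
  norm_num
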